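/- (Yannakakis' theorem for affine semigroups) Let Γ be a positive affine semigroup with slack matrix S_Γ. Then the minimal size of a lift of Γ equals the nonnegative integer rank of S_Γ, i.e. min{size of ι : Γ → Γ̃ a lift of Γ} = rank_{ℤ₊}(S_Γ). -/

import Mathlib

open Matrix BigOperators

noncomputable section

/-- The ambient space `ℝ^n`. -/
abbrev V (n : ℕ) := Fin n → ℝ

/-- The difference set `Λ_Γ = {x - y : x, y ∈ Γ}` of a set `Γ ⊆ ℝ^n`. -/
def diffSet {n : ℕ} (Γ : Set (V n)) : Set (V n) := {z | ∃ x ∈ Γ, ∃ y ∈ Γ, z = x - y}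

/-- A set is discrete if each of its points is isolated in it. -/
def IsDiscreteSet {n : ℕ} (Λ : Set (V n)) : Prop :=
  ∀ x ∈ Λ, ∃ ε : ℝ, 0 < ε ∧ ∀ y ∈ Λ, dist y x < ε → y = x

/-- An affine semigroup: a finitely generated additive submonoid of `ℝ^n` whose
difference group is discrete (a lattice). -/
def IsAffineSemigroup {n : ℕ} (Γ : Set (V n)) : Prop :=
  (∃ S : Finset (V n), (AddSubmonoid.closure (S : Set (V n)) : Set (V n)) = Γ) ∧
    IsDiscreteSet (diffSet Γ)

/-- A set is positive if `0` is its only element whose negative also belongs to it. -/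
def IsPositive {n : ℕ} (Γ : Set (V n)) : Prop := ∀ x ∈ Γ, -x ∈ Γ → x = 0

/-- The convex cone `K_Γ` of all nonnegative real combinations of elements of `Γ`. -/
def coneOf {n : ℕ} (Γ : Set (V n)) : Set (V n) :=
  {y | ∃ (k : ℕ) (c : Fin k → ℝ) (v : Fin k → V n),
    (∀ i, 0 ≤ c i) ∧ (∀ i, v i ∈ Γ) ∧ y = ∑ i, c i • v i}

/-- The dual cone `K* = {y : ⟨x,y⟩ ≥ 0 for all x ∈ K}`. -/
def dualCone {n : ℕ} (K : Set (V n)) : Set (V n) := {y | ∀ x ∈ K, 0 ≤ x ⬝ᵥ y}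

/-- The dual lattice `Λ* = {w ∈ span(Λ) : ⟨w,v⟩ ∈ ℤ for all v ∈ Λ}`. -/
def dualLattice {n : ℕ} (Λ : Set (V n)) : Set (V n) :=
  {w | w ∈ Submodule.span ℝ Λ ∧ ∀ v ∈ Λ, ∃ m : ℤ, w ⬝ᵥ v = (m : ℝ)}

/-- The dual affine semigroup `Γ* = (Λ_Γ)* ∩ (K_Γ)*`. -/
def dualSemigroup {n : ℕ} (Γ : Set (V n)) : Set (V n) :=
  dualLattice (diffSet Γ) ∩ dualCone (coneOf Γ)

/-- `A` generates the additive monoid `Γ`. -/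
def IsGenSet {n : ℕ} (A Γ : Set (V n)) : Prop := (AddSubmonoid.closure A : Set (V n)) = Γ

/-- `A` is a minimal generating set of the additive monoid `Γ`: it generates, and no
proper subset of it generates. -/
def IsMinGenSet {n : ℕ} (A Γ : Set (V n)) : Prop :=
  IsGenSet A Γ ∧ ∀ B ⊂ A, ¬ IsGenSet B Γ

/-- `S` is the slack matrix of the positive affine semigroup `Γ`: its `(i,j)` entry is
`⟨a i, b j⟩` where `a`, `b` enumerate the minimal generating sets of `Γ` and `Γ*`. -/
def IsSlackMatrix {n k l : ℕ} (Γ : Set (V n)) (S : Matrix (Fin k) (Fin l) ℤ) : Prop :=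
  ∃ (a : Fin k → V n) (b : Fin l → V n),
    Function.Injective a ∧ Function.Injective b ∧
    IsMinGenSet (Set.range a) Γ ∧ IsMinGenSet (Set.range b) (dualSemigroup Γ) ∧
    ∀ i j, (S i j : ℝ) = a i ⬝ᵥ b j

/-- The `i`-th row of an integer matrix, viewed as a real vector. -/
def rowVec {k l : ℕ} (S : Matrix (Fin k) (Fin l) ℤ) (i : Fin k) : V l := fun j => (S i j : ℝ)

/-- The `j`-th column of an integer matrix, viewed as a real vector. -/
def colVec {k l : ℕ} (S : Matrix (Fin k) (Fin l) ℤ) (j : Fin l) : V k := fun i => (S i j : ℝ)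

/-- `Γ_S^row`: all nonnegative integer combinations of the rows of `S`. -/
def GammaRow {k l : ℕ} (S : Matrix (Fin k) (Fin l) ℤ) : Set (V l) :=
  {x | ∃ c : Fin k → ℕ, x = ∑ i, (c i : ℝ) • rowVec S i}

/-- `Γ_S^col`: all nonnegative integer combinations of the columns of `S`. -/
def GammaCol {k l : ℕ} (S : Matrix (Fin k) (Fin l) ℤ) : Set (V k) :=
  {x | ∃ c : Fin l → ℕ, x = ∑ j, (c j : ℝ) • colVec S j}

/-- `Λ_S^row`: all integer combinations of the rows of `S`. -/
def LambdaRow {k l : ℕ} (S : Matrix (Fin k) (Fin l) ℤ) : Set (V l) :=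
  {x | ∃ c : Fin k → ℤ, x = ∑ i, (c i : ℝ) • rowVec S i}

/-- `Λ_S^col`: all integer combinations of the columns of `S`. -/
def LambdaCol {k l : ℕ} (S : Matrix (Fin k) (Fin l) ℤ) : Set (V k) :=
  {x | ∃ c : Fin l → ℤ, x = ∑ j, (c j : ℝ) • colVec S j}

/-- `K_S^row`: all nonnegative real combinations of the rows of `S`. -/
def KRow {k l : ℕ} (S : Matrix (Fin k) (Fin l) ℤ) : Set (V l) :=
  {x | ∃ c : Fin k → ℝ, (∀ i, 0 ≤ c i) ∧ x = ∑ i, c i • rowVec S i}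

/-- `K_S^col`: all nonnegative real combinations of the columns of `S`. -/
def KCol {k l : ℕ} (S : Matrix (Fin k) (Fin l) ℤ) : Set (V k) :=
  {x | ∃ c : Fin l → ℝ, (∀ j, 0 ≤ c j) ∧ x = ∑ j, c j • colVec S j}

/-- `Row(S)`: the row space of `S` over `ℝ`. -/
def RowSpace {k l : ℕ} (S : Matrix (Fin k) (Fin l) ℤ) : Set (V l) :=
  (Submodule.span ℝ (Set.range (rowVec S)) : Set (V l))

/-- `Col(S)`: the column space of `S` over `ℝ`. -/
def ColSpace {k l : ℕ} (S : Matrix (Fin k) (Fin l) ℤ) : Set (V k) :=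
  (Submodule.span ℝ (Set.range (colVec S)) : Set (V k))

/-- `ℤ^l` viewed inside `ℝ^l`. -/
def intPts (l : ℕ) : Set (V l) := {x | ∀ j, ∃ m : ℤ, x j = (m : ℝ)}

/-- `ℤ₊^l` viewed inside `ℝ^l`. -/
def nnIntPts (l : ℕ) : Set (V l) := {x | ∀ j, ∃ m : ℕ, x j = (m : ℝ)}

/-- `ℝ₊^l`: the nonnegative orthant. -/
def nnPts (l : ℕ) : Set (V l) := {x | ∀ j, 0 ≤ x j}

/-- `ι` (a linear map restricting to an additive semigroup homomorphism `Γ → Γ'`) is a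
lift of the positive affine semigroup `Γ`: `Γ'` is a positive affine semigroup and the
adjoint `ι*` (characterized on `Γ` by `⟨x, ι*(y)⟩ = ⟨ι(x), y⟩`) satisfies
`ι*(Γ'*) = Γ*`. -/
structure IsLift {n N : ℕ} (Γ : Set (V n)) (Γ' : Set (V N)) (ι : (V n) →ₗ[ℝ] (V N)) : Prop where
  lift_semigroup : IsAffineSemigroup Γ'
  lift_positive : IsPositive Γ'
  maps_to : ∀ x ∈ Γ, ι x ∈ Γ'
  adjoint_mem : ∀ y ∈ dualSemigroup Γ', ∃ z ∈ dualSemigroup Γ, ∀ x ∈ Γ, x ⬝ᵥ z = (ι x) ⬝ᵥ y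
  adjoint_surj : ∀ z ∈ dualSemigroup Γ, ∃ y ∈ dualSemigroup Γ', ∀ x ∈ Γ, x ⬝ᵥ z = (ι x) ⬝ᵥ y

/-- The nonnegative integer rank: the least inner dimension of a factorization
`A = B * C` with `B`, `C` nonnegative integer matrices. -/
def nnIntRank {m l : Type*} [Fintype m] [Fintype l] (A : Matrix m l ℤ) : ℕ :=
  sInf {r : ℕ | ∃ (B : Matrix m (Fin r) ℤ) (C : Matrix (Fin r) l ℤ),
    (∀ i j, 0 ≤ B i j) ∧ (∀ i j, 0 ≤ C i j) ∧ A = B * C}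

/-- The nonnegative rank: the least inner dimension of a factorization
`A = B * C` with `B`, `C` nonnegative real matrices. -/
def nnRank {m l : Type*} [Fintype m] [Fintype l] (A : Matrix m l ℤ) : ℕ :=
  sInf {r : ℕ | ∃ (B : Matrix m (Fin r) ℝ) (C : Matrix (Fin r) l ℝ),
    (∀ i j, 0 ≤ B i j) ∧ (∀ i j, 0 ≤ C i j) ∧ A.map (fun z => (z : ℝ)) = B * C}

/-- The Fibonacci semigroup `Γ^Fib_n = ℤ² ∩ {(x,y) : 0 ≤ F_{2n}·y ≤ F_{2n+2}·x}`
(with `Nat.fib`, so `F 1 = F 2 = 1`). -/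
def GammaFib (n : ℕ) : Set (V 2) :=
  {p | (∃ a : ℤ, p 0 = (a : ℝ)) ∧ (∃ b : ℤ, p 1 = (b : ℝ)) ∧
    0 ≤ (Nat.fib (2 * n) : ℝ) * p 1 ∧
    (Nat.fib (2 * n) : ℝ) * p 1 ≤ (Nat.fib (2 * n + 2) : ℝ) * p 0}

/-- Fibonacci numbers extended to negative indices by `F_{-m} = (-1)^{m+1} F_m`. -/
def fibZ (m : ℤ) : ℤ :=
  if 0 ≤ m then (Nat.fib m.toNat : ℤ)
  else (-1) ^ ((-m).toNat + 1) * (Nat.fib (-m).toNat : ℤ)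

/-- The `(n+1) × (n+1)` Toeplitz matrix with `(i,j)` entry `F_{2(i-j)+1}`. -/
def Mfib (n : ℕ) : Matrix (Fin (n + 1)) (Fin (n + 1)) ℤ :=
  fun i j => fibZ (2 * ((i : ℤ) - (j : ℤ)) + 1)

/-- `‖A‖₁`: the sum of all entries of a matrix. -/
def entrySum {m l : Type*} [Fintype m] [Fintype l] (A : Matrix m l ℤ) : ℤ := ∑ i, ∑ j, A i j

lemma sum_dotProduct' {m : ℕ} {ι : Type*} (s : Finset ι) (f : ι → V m) (y : V m) :
    (∑ t ∈ s, f t) ⬝ᵥ y = ∑ t ∈ s, f t ⬝ᵥ y := by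
  simp only [dotProduct, Finset.sum_apply, Finset.sum_mul]
  exact Finset.sum_comm

lemma dotProduct_sum' {m : ℕ} {ι : Type*} (s : Finset ι) (f : ι → V m) (y : V m) :
    y ⬝ᵥ (∑ t ∈ s, f t) = ∑ t ∈ s, y ⬝ᵥ f t := by
  simp only [dotProduct, Finset.sum_apply, Finset.mul_sum]
  exact Finset.sum_comm

lemma natCombo_mem_closure {m r : ℕ} (f : Fin r → V m) (c : Fin r → ℕ) :
    (∑ t, (c t : ℝ) • f t) ∈ AddSubmonoid.closure (Set.range f) := by
  apply AddSubmonoid.sum_mem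
  intro t _
  rw [Nat.cast_smul_eq_nsmul ℝ]
  exact AddSubmonoid.nsmul_mem _ (AddSubmonoid.subset_closure (Set.mem_range_self t)) _

lemma exists_natCombo_of_mem_closure {m r : ℕ} {f : Fin r → V m} {x : V m}
    (hx : x ∈ AddSubmonoid.closure (Set.range f)) :
    ∃ c : Fin r → ℕ, x = ∑ t, (c t : ℝ) • f t := by
  induction hx using AddSubmonoid.closure_induction with
  | mem y hy =>
      obtain ⟨t, rfl⟩ := hy
      exact ⟨fun s => if s = t then 1 else 0, by simp [Finset.sum_ite_eq', apply_ite]⟩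
  | zero => exact ⟨0, by simp⟩
  | add a b _ _ ha hb =>
      obtain ⟨ca, rfl⟩ := ha; obtain ⟨cb, rfl⟩ := hb
      exact ⟨ca + cb, by simp [add_smul, Finset.sum_add_distrib]⟩

lemma exists_dot_eq_on_span {l : ℕ} (s : Set (V l)) (y₀ : V l) :
    ∃ y' ∈ Submodule.span ℝ s, ∀ v ∈ Submodule.span ℝ s, v ⬝ᵥ y' = v ⬝ᵥ y₀ := by
  let E := EuclideanSpace ℝ (Fin l)
  let W : Submodule ℝ E :=
    (Submodule.span ℝ s).comap (WithLp.linearEquiv 2 ℝ (Fin l → ℝ)).toLinearMap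
  obtain ⟨y, hy, z, hz, hsum⟩ := W.exists_add_mem_mem_orthogonal (WithLp.toLp 2 y₀ : E)
  refine ⟨y.ofLp, hy, ?_⟩
  intro v hv
  have hvW : (WithLp.toLp 2 v : E) ∈ W := hv
  have h0 : @inner ℝ E _ (WithLp.toLp 2 v : E) z = 0 := hz _ hvW
  have hdot : (v : V l) ⬝ᵥ (z.ofLp : V l) = 0 := by
    rw [← h0]
    simp [dotProduct, PiLp.inner_apply, RCLike.inner_apply, mul_comm, E]
  have hy₀ : y₀ = (y.ofLp : V l) + (z.ofLp : V l) := congrArg WithLp.ofLp hsum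
  rw [hy₀, dotProduct_add, hdot, add_zero]

lemma exists_finset_closure {N : ℕ} {A : Set (V N)} {x : V N}
    (hx : x ∈ AddSubmonoid.closure A) :
    ∃ F : Finset (V N), ↑F ⊆ A ∧ x ∈ AddSubmonoid.closure (F : Set (V N)) := by
  classical
  induction hx using AddSubmonoid.closure_induction with
  | mem y hy =>
      exact ⟨{y}, by simpa using hy, AddSubmonoid.subset_closure (by simp)⟩
  | zero => exact ⟨∅, by simp, zero_mem _⟩
  | add a b _ _ ha hb =>
      obtain ⟨F₁, hF₁, haF⟩ := ha; obtain ⟨F₂, hF₂, hbF⟩ := hb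
      refine ⟨F₁ ∪ F₂, by simp [Set.union_subset_iff, hF₁, hF₂], ?_⟩
      have h1 : AddSubmonoid.closure (F₁ : Set (V N)) ≤
          AddSubmonoid.closure ((F₁ ∪ F₂ : Finset (V N)) : Set (V N)) :=
        AddSubmonoid.closure_mono (by simp [Set.subset_union_left])
      have h2 : AddSubmonoid.closure (F₂ : Set (V N)) ≤
          AddSubmonoid.closure ((F₁ ∪ F₂ : Finset (V N)) : Set (V N)) :=
        AddSubmonoid.closure_mono (by simp [Set.subset_union_right])
      exact add_mem (h1 haF) (h2 hbF)

lemma minGenSet_eq_finset {N : ℕ} {A Γ' : Set (V N)} (hA : IsMinGenSet A Γ')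
    (hfg : ∃ S₀ : Finset (V N), (AddSubmonoid.closure (S₀ : Set (V N)) : Set (V N)) = Γ') :
    ∃ F : Finset (V N), ↑F = A := by
  classical
  obtain ⟨S₀, hS₀⟩ := hfg
  have hAS : (AddSubmonoid.closure A : Set (V N)) = Γ' := hA.1
  have hmem : ∀ s ∈ S₀, ∃ F : Finset (V N), ↑F ⊆ A ∧
      s ∈ AddSubmonoid.closure (F : Set (V N)) := by
    intro s hs
    have : s ∈ AddSubmonoid.closure A := by
      have : s ∈ Γ' := by
        rw [← hS₀]; exact AddSubmonoid.subset_closure hs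
      rwa [← hAS] at this
    exact exists_finset_closure this
  choose Fs hFsub hFmem using hmem
  set F : Finset (V N) := S₀.attach.biUnion (fun s => Fs s.1 s.2) with hF
  have hFA : (F : Set (V N)) ⊆ A := by
    intro x hx
    simp only [hF, Finset.coe_biUnion, Set.mem_iUnion, Finset.mem_coe] at hx
    obtain ⟨s, hs, hxs⟩ := hx
    exact hFsub s.1 s.2 hxs
  have hgen : IsGenSet (F : Set (V N)) Γ' := by
    have hle1 : AddSubmonoid.closure (F : Set (V N)) ≤ AddSubmonoid.closure A :=
      AddSubmonoid.closure_mono hFA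
    have hle2 : AddSubmonoid.closure (S₀ : Set (V N)) ≤
        AddSubmonoid.closure (F : Set (V N)) := by
      rw [AddSubmonoid.closure_le]
      intro s hs
      have hsub : (Fs s hs : Set (V N)) ⊆ (F : Set (V N)) := by
        intro x hx
        simp only [hF, Finset.coe_biUnion, Set.mem_iUnion, Finset.mem_coe]
        exact ⟨⟨s, hs⟩, Finset.mem_attach _ _, hx⟩
      exact AddSubmonoid.closure_mono hsub (hFmem s hs)
    apply Set.Subset.antisymm
    · rw [← hAS]; exact hle1
    · rw [← hS₀]; exact hle2
  refine ⟨F, ?_⟩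
  by_contra hne
  exact hA.2 (F : Set (V N)) (ssubset_of_subset_of_ne hFA hne) hgen

lemma exists_enum {N r : ℕ} {A : Set (V N)} (F : Finset (V N)) (hFA : ↑F = A)
    (h : A.ncard = r) : ∃ g : Fin r → V N, Set.range g = A := by
  have hc : F.card = r := by rw [← h, ← hFA, Set.ncard_coe_finset]
  let e := F.equivFin
  refine ⟨fun i => (e.symm (Fin.cast hc.symm i) : V N), ?_⟩
  rw [← hFA]
  ext x
  constructor
  · rintro ⟨i, rfl⟩
    exact (e.symm (Fin.cast hc.symm i)).2
  · intro hx
    exact ⟨Fin.cast hc (e ⟨x, hx⟩), by simp⟩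

lemma subset_coneOf {n : ℕ} (Γ : Set (V n)) : Γ ⊆ coneOf Γ := by
  intro x hx
  exact ⟨1, fun _ => 1, fun _ => x, fun _ => zero_le_one, fun _ => hx, by simp⟩


lemma lower_bound {n k l : ℕ} {Γ : Set (V n)} {S : Matrix (Fin k) (Fin l) ℤ}
    (hS : IsSlackMatrix Γ S) {r N : ℕ} {Γ' : Set (V N)} {ι : (V n) →ₗ[ℝ] (V N)}
    {A : Set (V N)} (hlift : IsLift Γ Γ' ι) (hAmin : IsMinGenSet A Γ')
    (hAcard : A.ncard = r) :
    ∃ (B : Matrix (Fin k) (Fin r) ℤ) (C : Matrix (Fin r) (Fin l) ℤ),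
      (∀ i j, 0 ≤ B i j) ∧ (∀ i j, 0 ≤ C i j) ∧ S = B * C := by
  classical
  obtain ⟨a, b, -, -, haMin, hbMin, hSab⟩ := hS
  have haΓ : ∀ i, a i ∈ Γ := fun i => by
    rw [← haMin.1]; exact AddSubmonoid.subset_closure (Set.mem_range_self i)
  have hbΓ : ∀ j, b j ∈ dualSemigroup Γ := fun j => by
    rw [← hbMin.1]; exact AddSubmonoid.subset_closure (Set.mem_range_self j)
  -- enumerate the minimal generating set of Γ'
  obtain ⟨F, hFA⟩ := minGenSet_eq_finset hAmin hlift.lift_semigroup.1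
  obtain ⟨g, hg⟩ := exists_enum F hFA hAcard
  have hgen : (AddSubmonoid.closure (Set.range g) : Set (V N)) = Γ' := by
    rw [hg]; exact hAmin.1
  have hgΓ' : ∀ t, g t ∈ Γ' := fun t => by
    rw [← hgen]; exact AddSubmonoid.subset_closure (Set.mem_range_self t)
  have h0Γ' : (0 : V N) ∈ Γ' := by
    rw [← hgen]; exact zero_mem _
  -- express ι (a i) in the generators
  have hBex : ∀ i, ∃ cB : Fin r → ℕ, ι (a i) = ∑ t, (cB t : ℝ) • g t := by
    intro i
    have : ι (a i) ∈ AddSubmonoid.closure (Set.range g) := by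
      rw [SetLike.mem_coe.symm, hgen]
      exact hlift.maps_to _ (haΓ i)
    exact exists_natCombo_of_mem_closure this
  choose cB hcB using hBex
  -- pull back the dual generators
  have hyex : ∀ j, ∃ y ∈ dualSemigroup Γ', ∀ x ∈ Γ, x ⬝ᵥ (b j) = ι x ⬝ᵥ y :=
    fun j => hlift.adjoint_surj (b j) (hbΓ j)
  choose y hy hyd using hyex
  -- the C matrix entries
  have hCex : ∀ t j, ∃ m : ℤ, (g t) ⬝ᵥ (y j) = (m : ℝ) ∧ 0 ≤ m := by
    intro t j
    have hdiff : g t ∈ diffSet Γ' := ⟨g t, hgΓ' t, 0, h0Γ', by simp⟩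
    obtain ⟨m, hm⟩ := (hy j).1.2 (g t) hdiff
    refine ⟨m, by rwa [dotProduct_comm], ?_⟩
    have hnn : 0 ≤ (g t) ⬝ᵥ (y j) := (hy j).2 (g t) (subset_coneOf Γ' (hgΓ' t))
    rw [dotProduct_comm, hm] at hnn
    exact_mod_cast hnn
  choose Cm hCm hCnn using hCex
  set Bmat : Matrix (Fin k) (Fin r) ℤ := Matrix.of (fun i t => (cB i t : ℤ)) with hBmat
  set Cmat : Matrix (Fin r) (Fin l) ℤ := Matrix.of (fun t j => Cm t j) with hCmat
  refine ⟨Bmat, Cmat, fun i t => by simp [hBmat], fun t j => hCnn t j, ?_⟩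
  ext i j
  have hreal : (S i j : ℝ) = ∑ t, (cB i t : ℝ) * (Cm t j : ℝ) := by
    rw [hSab i j, hyd j (a i) (haΓ i), hcB i, sum_dotProduct']
    refine Finset.sum_congr rfl (fun t _ => ?_)
    rw [smul_dotProduct, hCm t j, smul_eq_mul]
  have hfin : ((S i j : ℤ) : ℝ) = (((Bmat * Cmat) i j : ℤ) : ℝ) := by
    rw [hreal, Matrix.mul_apply]
    push_cast
    rfl
  exact_mod_cast hfin

lemma exists_lift_of_factorization {n k l r₀ : ℕ} {Γ : Set (V n)}
    {S : Matrix (Fin k) (Fin l) ℤ} (hS : IsSlackMatrix Γ S)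
    (B : Matrix (Fin k) (Fin r₀) ℤ) (C : Matrix (Fin r₀) (Fin l) ℤ)
    (hB : ∀ i t, 0 ≤ B i t) (hC : ∀ t j, 0 ≤ C t j) (hfac : S = B * C) :
    ∃ (Γ' : Set (V l)) (ι : (V n) →ₗ[ℝ] (V l)) (A : Set (V l)),
      IsLift Γ Γ' ι ∧ IsMinGenSet A Γ' ∧ A.ncard ≤ r₀ := by
  classical
  obtain ⟨a, b, -, -, haMin, hbMin, hSab⟩ := hS
  have haΓ : ∀ i, a i ∈ Γ := fun i => by
    rw [← haMin.1]; exact AddSubmonoid.subset_closure (Set.mem_range_self i)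
  have hbΓ : ∀ j, b j ∈ dualSemigroup Γ := fun j => by
    rw [← hbMin.1]; exact AddSubmonoid.subset_closure (Set.mem_range_self j)
  set c : Fin r₀ → V l := fun t j => (C t j : ℝ) with hc
  set Γ' : Set (V l) := (AddSubmonoid.closure (Set.range c) : Set (V l)) with hΓ'
  have hmemΓ' : ∀ x : V l, x ∈ Γ' ↔ x ∈ AddSubmonoid.closure (Set.range c) :=
    fun x => Iff.rfl
  -- basic facts about Γ'
  have hΓ'nn : ∀ x ∈ Γ', ∀ j, 0 ≤ x j := by
    intro x hx
    rw [hmemΓ'] at hx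
    induction hx using AddSubmonoid.closure_induction with
    | mem v hv =>
        obtain ⟨t, rfl⟩ := hv
        intro j
        simp only [hc]
        exact_mod_cast hC t j
    | zero => intro j; simp
    | add p q _ _ hp hq => intro j; exact add_nonneg (hp j) (hq j)
  have hΓ'int : ∀ x ∈ Γ', ∀ j, ∃ m : ℤ, x j = (m : ℝ) := by
    intro x hx
    rw [hmemΓ'] at hx
    induction hx using AddSubmonoid.closure_induction with
    | mem v hv =>
        obtain ⟨t, rfl⟩ := hv
        intro j
        exact ⟨C t j, rfl⟩
    | zero => intro j; exact ⟨0, by simp⟩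
    | add p q _ _ hp hq =>
        intro j
        obtain ⟨mp, hmp⟩ := hp j; obtain ⟨mq, hmq⟩ := hq j
        exact ⟨mp + mq, by push_cast [← hmp, ← hmq]; rfl⟩
  have hΓ'W : ∀ x ∈ Γ', x ∈ Submodule.span ℝ (Set.range c) := by
    intro x hx
    rw [hmemΓ'] at hx
    induction hx using AddSubmonoid.closure_induction with
    | mem v hv => exact Submodule.subset_span hv
    | zero => exact zero_mem _
    | add p q _ _ hp hq => exact add_mem hp hq
  have h0Γ' : (0 : V l) ∈ Γ' := by rw [hmemΓ']; exact zero_mem _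
  have hcΓ' : ∀ t, c t ∈ Γ' := fun t => by
    rw [hmemΓ']; exact AddSubmonoid.subset_closure (Set.mem_range_self t)
  have hdiffint : ∀ v ∈ diffSet Γ', ∀ j, ∃ m : ℤ, v j = (m : ℝ) := by
    rintro v ⟨p, hp, q, hq, rfl⟩ j
    obtain ⟨mp, hmp⟩ := hΓ'int p hp j
    obtain ⟨mq, hmq⟩ := hΓ'int q hq j
    exact ⟨mp - mq, by push_cast [← hmp, ← hmq]; rfl⟩
  have hdiffW : ∀ v ∈ diffSet Γ', v ∈ Submodule.span ℝ (Set.range c) := by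
    rintro v ⟨p, hp, q, hq, rfl⟩
    exact sub_mem (hΓ'W p hp) (hΓ'W q hq)
  have hconeW : ∀ u ∈ coneOf Γ', u ∈ Submodule.span ℝ (Set.range c) := by
    rintro u ⟨m, d, w, hd, hw, rfl⟩
    exact Submodule.sum_mem _ (fun i _ => Submodule.smul_mem _ _ (hΓ'W _ (hw i)))
  -- the lift map
  set ι : (V n) →ₗ[ℝ] (V l) :=
    { toFun := fun x => fun j => x ⬝ᵥ b j
      map_add' := fun x y => by funext j; simp [add_dotProduct]
      map_smul' := fun r x => by funext j; simp [smul_dotProduct] } with hι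
  have hιx : ∀ (x : V n) (j : Fin l), ι x j = x ⬝ᵥ b j := fun x j => rfl
  have hιdot : ∀ (x : V n) (y : V l), ι x ⬝ᵥ y = x ⬝ᵥ (∑ j, y j • b j) := by
    intro x y
    rw [dotProduct_sum']
    refine Finset.sum_congr rfl (fun j _ => ?_)
    rw [dotProduct_smul, hιx]
    simp [dotProduct, Finset.mul_sum, mul_comm, mul_left_comm]
  -- ι maps Γ into Γ'
  have hmaps : ∀ x ∈ Γ, ι x ∈ Γ' := by
    intro x hx
    rw [← haMin.1] at hx
    rw [hmemΓ']
    induction hx using AddSubmonoid.closure_induction with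
    | mem v hv =>
        obtain ⟨i, rfl⟩ := hv
        have : ι (a i) = ∑ t, (((B i t).toNat : ℕ) : ℝ) • c t := by
          funext j
          rw [hιx, ← hSab i j, hfac, Matrix.mul_apply]
          simp only [Finset.sum_apply, Pi.smul_apply, smul_eq_mul, hc]
          push_cast
          refine Finset.sum_congr rfl (fun t _ => ?_)
          have hbt : (((B i t).toNat : ℕ) : ℝ) = ((B i t : ℤ) : ℝ) := by
            exact_mod_cast congrArg (fun z : ℤ => (z : ℝ)) (Int.toNat_of_nonneg (hB i t))
          rw [hbt]
        rw [this]
        exact natCombo_mem_closure c _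
    | zero => simpa using (zero_mem (AddSubmonoid.closure (Set.range c)))
    | add p q _ _ hp hq => rw [map_add]; exact add_mem hp hq
  -- Γ' is a positive affine semigroup
  have haff : IsAffineSemigroup Γ' := by
    constructor
    · exact ⟨Finset.univ.image c, by rw [Finset.coe_image, Finset.coe_univ, Set.image_univ]⟩
    · intro x hx
      refine ⟨1, one_pos, ?_⟩
      intro y hy hd
      funext j
      obtain ⟨my, hmy⟩ := hdiffint y hy j
      obtain ⟨mx, hmx⟩ := hdiffint x hx j
      have h1 : dist (y j) (x j) < 1 := lt_of_le_of_lt (dist_le_pi_dist y x j) hd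
      rw [Real.dist_eq, hmy, hmx] at h1
      have h2 : |my - mx| < 1 := by
        have : |((my : ℝ)) - (mx : ℝ)| < ((1 : ℤ) : ℝ) := by push_cast; exact h1
        exact_mod_cast this
      obtain ⟨h3, h4⟩ := abs_lt.mp h2
      have hme : my = mx := by omega
      rw [hmy, hmx, hme]
  have hpos' : IsPositive Γ' := by
    intro x hx hnx
    funext j
    have h1 := hΓ'nn x hx j
    have h2 := hΓ'nn (-x) hnx j
    simp only [Pi.neg_apply, neg_nonneg] at h2
    exact le_antisymm h2 h1
  -- adjoint_mem
  have hadjmem : ∀ y ∈ dualSemigroup Γ', ∃ z ∈ dualSemigroup Γ,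
      ∀ x ∈ Γ, x ⬝ᵥ z = ι x ⬝ᵥ y := by
    intro y hy
    set z : V n := ∑ j, y j • b j with hz
    have hdotz : ∀ x : V n, x ⬝ᵥ z = ι x ⬝ᵥ y := fun x => (hιdot x y).symm
    refine ⟨z, ⟨⟨?_, ?_⟩, ?_⟩, fun x _ => hdotz x⟩
    · exact Submodule.sum_mem _ (fun j _ => Submodule.smul_mem _ _ (hbΓ j).1.1)
    · rintro v ⟨p, hp, q, hq, rfl⟩
      have hd : ι p - ι q ∈ diffSet Γ' := ⟨ι p, hmaps p hp, ι q, hmaps q hq, rfl⟩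
      obtain ⟨m, hm⟩ := hy.1.2 _ hd
      refine ⟨m, ?_⟩
      rw [dotProduct_sub, dotProduct_comm z p, dotProduct_comm z q, hdotz p, hdotz q, ← hm,
        dotProduct_comm y, sub_dotProduct]
    · rintro u ⟨m, d, w, hd, hw, rfl⟩
      rw [sum_dotProduct']
      refine Finset.sum_nonneg (fun i _ => ?_)
      rw [smul_dotProduct, smul_eq_mul]
      refine mul_nonneg (hd i) ?_
      rw [hdotz (w i)]
      exact hy.2 _ (subset_coneOf Γ' (hmaps _ (hw i)))
  -- adjoint_surj
  have hadjsurj : ∀ z ∈ dualSemigroup Γ, ∃ y ∈ dualSemigroup Γ',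
      ∀ x ∈ Γ, x ⬝ᵥ z = ι x ⬝ᵥ y := by
    intro z hz
    have hzc : z ∈ AddSubmonoid.closure (Set.range b) := by
      have : z ∈ (AddSubmonoid.closure (Set.range b) : Set (V n)) := by
        rw [hbMin.1]; exact hz
      exact this
    obtain ⟨m, rfl⟩ := exists_natCombo_of_mem_closure hzc
    set y₀ : V l := fun j => (m j : ℝ) with hy₀
    have hdoty₀ : ∀ x : V n, x ⬝ᵥ (∑ j, (m j : ℝ) • b j) = ι x ⬝ᵥ y₀ := by
      intro x
      rw [hιdot]
    obtain ⟨y', hy'W, hy'dot⟩ := exists_dot_eq_on_span (Set.range c) y₀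
    have hrange_diff : Set.range c ⊆ diffSet Γ' := by
      rintro v ⟨t, rfl⟩
      exact ⟨c t, hcΓ' t, 0, h0Γ', by simp⟩
    refine ⟨y', ⟨⟨?_, ?_⟩, ?_⟩, ?_⟩
    · exact Submodule.span_mono hrange_diff hy'W
    · intro v hv
      have hvW := hdiffW v hv
      have : y' ⬝ᵥ v = y₀ ⬝ᵥ v := by
        rw [dotProduct_comm y' v, dotProduct_comm y₀ v]
        exact hy'dot v hvW
      rw [this]
      obtain ⟨p, hp, q, hq, rfl⟩ := hv
      have hco : ∀ j, ∃ mj : ℤ, (p - q) j = (mj : ℝ) := hdiffint _ ⟨p, hp, q, hq, rfl⟩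
      choose mv hmv using hco
      refine ⟨∑ j, (m j : ℤ) * mv j, ?_⟩
      rw [dotProduct]
      push_cast
      refine Finset.sum_congr rfl (fun j _ => ?_)
      rw [hy₀]
      rw [hmv j]
    · intro u hu
      have huW := hconeW u hu
      rw [hy'dot u huW]
      obtain ⟨mm, d, w, hd, hw, rfl⟩ := hu
      rw [sum_dotProduct']
      refine Finset.sum_nonneg (fun i _ => ?_)
      rw [smul_dotProduct, smul_eq_mul]
      refine mul_nonneg (hd i) ?_
      rw [dotProduct]
      refine Finset.sum_nonneg (fun j _ => ?_)
      exact mul_nonneg (hΓ'nn _ (hw i) j) (by positivity)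
    · intro x hx
      have hιW := hΓ'W _ (hmaps x hx)
      rw [hdoty₀ x]
      exact (hy'dot _ hιW).symm
  -- minimal generating set of size at most r₀
  have hGset : ∃ A : Set (V l), IsMinGenSet A Γ' ∧ A.ncard ≤ r₀ := by
    set G : Finset (V l) := Finset.univ.image c with hG
    set T : Finset (Finset (V l)) :=
      G.powerset.filter (fun F => IsGenSet (F : Set (V l)) Γ') with hT
    have hGT : G ∈ T := by
      rw [hT, Finset.mem_filter]
      refine ⟨Finset.mem_powerset_self G, ?_⟩
      show (AddSubmonoid.closure (G : Set (V l)) : Set (V l)) = Γ'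
      rw [hG, Finset.coe_image, Finset.coe_univ, Set.image_univ]
    obtain ⟨F₀, hF₀T, hF₀min⟩ := T.exists_min_image Finset.card ⟨G, hGT⟩
    rw [hT, Finset.mem_filter, Finset.mem_powerset] at hF₀T
    refine ⟨(F₀ : Set (V l)), ⟨hF₀T.2, ?_⟩, ?_⟩
    · intro Bs hBs hBgen
      have hBfin : Bs.Finite := (F₀.finite_toSet).subset hBs.subset
      have hBT : hBfin.toFinset ∈ T := by
        rw [hT, Finset.mem_filter, Finset.mem_powerset]
        constructor
        · intro x hxB
          exact hF₀T.1 (by exact_mod_cast hBs.subset (hBfin.mem_toFinset.mp hxB))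
        · rwa [hBfin.coe_toFinset]
      have hlt : hBfin.toFinset.card < F₀.card := by
        apply Finset.card_lt_card
        rw [Finset.ssubset_iff_subset_ne]
        constructor
        · intro x hxB
          exact_mod_cast hBs.subset (hBfin.mem_toFinset.mp hxB)
        · intro heq
          apply hBs.ne
          rw [← hBfin.coe_toFinset, heq]
      exact absurd (hF₀min _ hBT) (by omega)
    · rw [Set.ncard_coe_finset]
      calc F₀.card ≤ G.card := Finset.card_le_card hF₀T.1
        _ ≤ Finset.univ.card := Finset.card_image_le.trans (le_of_eq rfl)
        _ = r₀ := by simp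
  obtain ⟨A, hAmin, hAcard⟩ := hGset
  exact ⟨Γ', ι, A, ⟨haff, hpos', hmaps, hadjmem, hadjsurj⟩, hAmin, hAcard⟩

/-- Yannakakis for affine semigroups: the minimal size of a lift of a
positive affine semigroup `Γ` equals the nonnegative integer rank of its slack matrix. -/
theorem yannakakis_affine_semigroups {n k l : ℕ} (Γ : Set (V n))
    (hΓ : IsAffineSemigroup Γ) (hpos : IsPositive Γ)
    (S : Matrix (Fin k) (Fin l) ℤ) (hS : IsSlackMatrix Γ S) :
    IsLeast {r : ℕ | ∃ (N : ℕ) (Γ' : Set (V N)) (ι : (V n) →ₗ[ℝ] (V N)) (A : Set (V N)),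
      IsLift Γ Γ' ι ∧ IsMinGenSet A Γ' ∧ A.ncard = r} (nnIntRank S) := by
  classical
  have hlb : ∀ r ∈ {r : ℕ | ∃ (N : ℕ) (Γ' : Set (V N)) (ι : (V n) →ₗ[ℝ] (V N)) (A : Set (V N)),
      IsLift Γ Γ' ι ∧ IsMinGenSet A Γ' ∧ A.ncard = r}, nnIntRank S ≤ r := by
    rintro r ⟨N, Γ', ι, A, hlift, hAmin, hAcard⟩
    obtain ⟨Bm, Cm, hBm, hCm, heq⟩ := lower_bound hS hlift hAmin hAcard
    exact Nat.sInf_le ⟨Bm, Cm, hBm, hCm, heq⟩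
  have hSnn : ∀ i j, 0 ≤ S i j := by
    obtain ⟨a, b, -, -, haMin, hbMin, hSab⟩ := hS
    intro i j
    have haΓ : a i ∈ Γ := by
      rw [← haMin.1]; exact AddSubmonoid.subset_closure (Set.mem_range_self i)
    have hbΓ : b j ∈ dualSemigroup Γ := by
      rw [← hbMin.1]; exact AddSubmonoid.subset_closure (Set.mem_range_self j)
    have : (0 : ℝ) ≤ (S i j : ℝ) := by
      rw [hSab i j]
      exact hbΓ.2 (a i) (subset_coneOf Γ haΓ)
    exact_mod_cast this
  have hne : {r : ℕ | ∃ (B : Matrix (Fin k) (Fin r) ℤ) (C : Matrix (Fin r) (Fin l) ℤ),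
      (∀ i j, 0 ≤ B i j) ∧ (∀ i j, 0 ≤ C i j) ∧ S = B * C}.Nonempty := by
    refine ⟨l, S, 1, hSnn, ?_, (Matrix.mul_one S).symm⟩
    intro i j
    rw [Matrix.one_apply]
    split <;> simp
  have hmem0 : nnIntRank S ∈ {r : ℕ | ∃ (B : Matrix (Fin k) (Fin r) ℤ)
      (C : Matrix (Fin r) (Fin l) ℤ),
      (∀ i j, 0 ≤ B i j) ∧ (∀ i j, 0 ≤ C i j) ∧ S = B * C} := by
    rw [nnIntRank]
    exact Nat.sInf_mem hne
  obtain ⟨B, C, hB, hC, hfac⟩ := hmem0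
  obtain ⟨Γ', ι, A, hlift, hAmin, hAle⟩ := exists_lift_of_factorization hS B C hB hC hfac
  have hmem : A.ncard ∈ {r : ℕ | ∃ (N : ℕ) (Γ' : Set (V N)) (ι : (V n) →ₗ[ℝ] (V N))
      (A : Set (V N)), IsLift Γ Γ' ι ∧ IsMinGenSet A Γ' ∧ A.ncard = r} :=
    ⟨l, Γ', ι, A, hlift, hAmin, rfl⟩
  have h1 : nnIntRank S ≤ A.ncard := hlb _ hmem
  have heq : A.ncard = nnIntRank S := le_antisymm hAle h1
  exact ⟨heq ▸ hmem, hlb⟩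

end
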